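/- If a polynomial f(x) of degree n with real coefficients is written as f(x) = \sum_{k=0}^{\lfloor n/2 \rfloor} γ_k x^k (1+x)^{n-2k}, then f has only non-positive real zeros if and only if the polynomial γ(x) = \sum_{k=0}^{\lfloor n/2 \rfloor} γ_k x^k has only non-positive real zeros. -/

import Mathlib

open Polynomial

/-- Key substitution identity: for `z ≠ -1`,
`f(z) = (1+z)^n * γ(z/(1+z)^2)`. -/
lemma gamma_key (n : ℕ) (γ : ℕ → ℝ) (z : ℂ) (h1 : (1 : ℂ) + z ≠ 0) :
    Polynomial.aeval z (∑ k ∈ Finset.range (n / 2 + 1),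
        Polynomial.C (γ k) * Polynomial.X ^ k * (1 + Polynomial.X) ^ (n - 2 * k))
      = (1 + z) ^ n *
        Polynomial.aeval (z / (1 + z) ^ 2)
          (∑ k ∈ Finset.range (n / 2 + 1), Polynomial.C (γ k) * Polynomial.X ^ k) := by
  simp only [map_sum, map_mul, map_pow, map_add, map_one, aeval_X, aeval_C, Finset.mul_sum]
  refine Finset.sum_congr rfl ?_
  intro k hk
  have hk2 : 2 * k ≤ n := by
    have := Finset.mem_range.mp hk; omega
  have hp : (1 + z) ^ (n - 2 * k) * ((1 + z) ^ 2) ^ k = (1 + z) ^ n := by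
    rw [← pow_mul, ← pow_add]; congr 1; omega
  rw [div_pow, ← hp]
  field_simp

theorem gamma_expansion_nonpos_roots (n : ℕ) (f : Polynomial ℝ) (γ : ℕ → ℝ)
    (hdeg : f.natDegree = n)
    (hf : f = ∑ k ∈ Finset.range (n / 2 + 1),
        Polynomial.C (γ k) * Polynomial.X ^ k * (1 + Polynomial.X) ^ (n - 2 * k)) :
    ((∀ z : ℂ, Polynomial.aeval z f = 0 → ∃ r : ℝ, r ≤ 0 ∧ z = (r : ℂ)) ↔
      (∀ z : ℂ,
        Polynomial.aeval z (∑ k ∈ Finset.range (n / 2 + 1), Polynomial.C (γ k) * Polynomial.X ^ k)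
          = 0 → ∃ r : ℝ, r ≤ 0 ∧ z = (r : ℂ))) := by
  subst hf
  constructor
  · -- f has nonpos real roots → γ has nonpos real roots
    intro hF w hw
    by_cases hw0 : w = 0
    · exact ⟨0, le_refl 0, by simp [hw0]⟩
    -- pick a root z of w*(1+z)^2 = z
    obtain ⟨s, hs⟩ := IsAlgClosed.exists_pow_nat_eq (k := ℂ) (1 - 4 * w) (n := 2) (by norm_num)
    set z : ℂ := ((1 - 2 * w) + s) / (2 * w) with hzdef
    have h2w : (2 : ℂ) * w ≠ 0 := by simpa using hw0
    have hzz : 2 * w * z = 1 - 2 * w + s := by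
      rw [hzdef]
      field_simp
    have h4 : 4 * w * (w * (1 + z) ^ 2) = 4 * w * z := by
      linear_combination (4 * w + 2 * w * z + (1 - 2 * w + s) - 2) * hzz + hs
    have hquad : w * (1 + z) ^ 2 = z :=
      mul_left_cancel₀ (by simpa using hw0 : (4 : ℂ) * w ≠ 0) h4
    have hz1 : (1 : ℂ) + z ≠ 0 := by
      intro h
      have hzz : z = -1 := by linear_combination h
      rw [hzz] at hquad
      norm_num at hquad
    have hwz : w = z / (1 + z) ^ 2 := (eq_div_iff (pow_ne_zero 2 hz1)).mpr hquad
    have hfz : Polynomial.aeval z (∑ k ∈ Finset.range (n / 2 + 1),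
        Polynomial.C (γ k) * Polynomial.X ^ k * (1 + Polynomial.X) ^ (n - 2 * k)) = 0 := by
      rw [gamma_key n γ z hz1, ← hwz, hw, mul_zero]
    obtain ⟨r, hr, hzr⟩ := hF z hfz
    refine ⟨r / (1 + r) ^ 2, ?_, ?_⟩
    · exact div_nonpos_of_nonpos_of_nonneg hr (sq_nonneg _)
    · rw [hwz, hzr]
      push_cast
      rfl
  · -- γ has nonpos real roots → f has nonpos real roots
    intro hG z hz
    by_cases hz1 : (1 : ℂ) + z = 0
    · exact ⟨-1, by norm_num, by push_cast; linear_combination hz1⟩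
    have hzn : (1 + z) ^ n ≠ 0 := pow_ne_zero _ hz1
    have hgw : Polynomial.aeval (z / (1 + z) ^ 2)
        (∑ k ∈ Finset.range (n / 2 + 1), Polynomial.C (γ k) * Polynomial.X ^ k) = 0 := by
      have := (gamma_key n γ z hz1).symm.trans hz
      exact (mul_eq_zero.mp this).resolve_left hzn
    obtain ⟨r, hr, hwr⟩ := hG _ hgw
    -- z satisfies r*(1+z)^2 = z
    have hquad : (r : ℂ) * (1 + z) ^ 2 = z := by
      rw [← hwr]
      field_simp
    rcases eq_or_lt_of_le hr with hr0 | hr0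
    · -- r = 0 : then z = 0
      rw [hr0] at hquad
      refine ⟨0, le_refl 0, ?_⟩
      push_cast at hquad ⊢
      simpa using hquad.symm
    · -- r < 0
      set s : ℝ := Real.sqrt (1 - 4 * r) with hsdef
      have hs2 : s ^ 2 = 1 - 4 * r := Real.sq_sqrt (by nlinarith)
      have hs0 : 0 ≤ s := Real.sqrt_nonneg _
      have hprod : (((2 * r : ℝ) : ℂ) * z - ((1 - 2 * r + s : ℝ) : ℂ)) *
          (((2 * r : ℝ) : ℂ) * z - ((1 - 2 * r - s : ℝ) : ℂ)) = 0 := by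
        push_cast
        have hs2' : ((s : ℂ)) ^ 2 = 1 - 4 * (r : ℂ) := by exact_mod_cast hs2
        linear_combination 4 * (r : ℂ) * hquad - hs2'
      have hrc : (r : ℂ) ≠ 0 := by exact_mod_cast ne_of_lt hr0
      have h2rc : 2 * (r : ℂ) ≠ 0 := mul_ne_zero two_ne_zero hrc
      have hnum1 : 0 < 1 - 2 * r + s := by nlinarith
      have hnum2 : 0 < 1 - 2 * r - s := by nlinarith
      rcases mul_eq_zero.mp hprod with h | h
      · refine ⟨(1 - 2 * r + s) / (2 * r), ?_, ?_⟩
        · exact div_nonpos_of_nonneg_of_nonpos (by linarith) (by linarith)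
        · push_cast
          push_cast at h
          rw [eq_div_iff h2rc]
          linear_combination h
      · refine ⟨(1 - 2 * r - s) / (2 * r), ?_, ?_⟩
        · exact div_nonpos_of_nonneg_of_nonpos (by linarith) (by linarith)
        · push_cast
          push_cast at h
          rw [eq_div_iff h2rc]
          linear_combination h
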